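/- Let a and b be coprime positive integers and k ∈ ℕ. Then the formal power series over ℤ whose j-th coefficient is 1 if j ∈ S_k(a,b) and 0 otherwise satisfies (∑_{j ∈ S_k(a,b)} X^j) · (1 - X^a) · (1 - X^b) = X^{abk} · (1 - X^{ab}). Equivalently, ∑_{j ∈ S_k(a,b)} X^j = X^{abk}(1 - X^{ab}) / ((1 - X^a)(1 - X^b)) as formal power series. -/

import Mathlib

/-- `repCount a b j` is the number of representations of `j` in the form
`m * a + n * b` with `m, n : ℕ`. -/
noncomputable def repCount (a b j : ℕ) : ℕ :=
  Nat.card {p : ℕ × ℕ // p.1 * a + p.2 * b = j}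

section Aux

private lemma rep_finite {a b : ℕ} (ha : 0 < a) (hb : 0 < b) (j : ℕ) :
    {p : ℕ × ℕ | p.1 * a + p.2 * b = j}.Finite := by
  apply Set.Finite.subset ((Set.finite_Iic j).prod (Set.finite_Iic j))
  rintro ⟨m, n⟩ h
  simp only [Set.mem_setOf_eq] at h
  have h1 : m * 1 ≤ m * a := Nat.mul_le_mul_left m ha
  have h2 : n * 1 ≤ n * b := Nat.mul_le_mul_left n hb
  constructor <;> simp only [Set.mem_Iic] <;> omega

private lemma rep_uniq {a b : ℕ} (hb : 0 < b) (hab : Nat.Coprime a b)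
    {m₁ n₁ m₂ n₂ : ℕ} (h₁ : m₁ < b) (h₂ : m₂ < b)
    (h : m₁ * a + n₁ * b = m₂ * a + n₂ * b) : m₁ = m₂ ∧ n₁ = n₂ := by
  have hba : IsCoprime (b : ℤ) (a : ℤ) := by
    rw [Int.isCoprime_iff_gcd_eq_one, Int.gcd_natCast_natCast]
    exact hab.symm
  have hd : (b : ℤ) ∣ ((m₁ : ℤ) - m₂) * a := by
    refine ⟨(n₂ : ℤ) - n₁, ?_⟩
    have h' : (m₁ : ℤ) * a + n₁ * b = m₂ * a + n₂ * b := by exact_mod_cast h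
    ring_nf
    ring_nf at h'
    linarith
  have hd2 : (b : ℤ) ∣ (m₁ : ℤ) - m₂ := hba.dvd_of_dvd_mul_right hd
  have hz : (m₁ : ℤ) - m₂ = 0 := by
    refine Int.eq_zero_of_abs_lt_dvd hd2 ?_
    rw [abs_lt]
    constructor <;> omega
  have hm : m₁ = m₂ := by omega
  subst hm
  refine ⟨rfl, Nat.eq_of_mul_eq_mul_right hb (by omega)⟩

private lemma exists_small {a b : ℕ} (ha : 0 < a) (hb : 0 < b) (hab : Nat.Coprime a b)
    (c : ℕ) (hc : a * b ≤ c) : ∃ p : ℕ × ℕ, p.1 < b ∧ p.1 * a + p.2 * b = c := by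
  haveI : NeZero b := ⟨hb.ne'⟩
  set m := ((c : ZMod b) * (a : ZMod b)⁻¹).val with hm_def
  have hm : m < b := ZMod.val_lt _
  have hma : ((m * a : ℕ) : ZMod b) = (c : ZMod b) := by
    push_cast
    rw [hm_def, ZMod.natCast_val, ZMod.cast_id, mul_assoc,
      ZMod.inv_mul_of_unit _ ((ZMod.isUnit_iff_coprime a b).2 hab), mul_one]
  have hmeq : m * a ≡ c [MOD b] := (ZMod.natCast_eq_natCast_iff _ _ _).1 hma
  have hle : m * a ≤ c := by
    have h1 : m * a < b * a := (Nat.mul_lt_mul_right ha).2 hm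
    have h2 : b * a = a * b := Nat.mul_comm b a
    omega
  have hdvd : b ∣ c - m * a := (Nat.modEq_iff_dvd' hle).1 hmeq
  refine ⟨(m, (c - m * a) / b), hm, ?_⟩
  have hn : (c - m * a) / b * b = c - m * a := Nat.div_mul_cancel hdvd
  simp only
  omega

private lemma repCount_add {a b : ℕ} (ha : 0 < a) (hb : 0 < b) (hab : Nat.Coprime a b)
    (j : ℕ) : repCount a b (j + a * b) = repCount a b j + 1 := by
  obtain ⟨⟨m₀, n₀⟩, hm₀, he₀⟩ := exists_small ha hb hab (j + a * b) (by omega)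
  simp only at hm₀ he₀
  have hinj : Function.Injective (fun p : ℕ × ℕ => (p.1 + b, p.2)) := by
    rintro ⟨x1, x2⟩ ⟨y1, y2⟩ h
    simp only [Prod.mk.injEq] at h ⊢
    omega
  have hset : {p : ℕ × ℕ | p.1 * a + p.2 * b = j + a * b}
      = insert (m₀, n₀) ((fun p : ℕ × ℕ => (p.1 + b, p.2)) '' {p | p.1 * a + p.2 * b = j}) := by
    ext ⟨m, n⟩
    simp only [Set.mem_setOf_eq, Set.mem_insert_iff, Set.mem_image, Prod.mk.injEq, Prod.exists]
    constructor
    · intro h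
      rcases lt_or_ge m b with hm | hm
      · obtain ⟨h1, h2⟩ := rep_uniq hb hab hm hm₀ (h.trans he₀.symm)
        exact Or.inl ⟨h1, h2⟩
      · refine Or.inr ⟨m - b, n, ?_, by omega, rfl⟩
        have : (m - b) * a + b * a = m * a := by
          rw [← Nat.add_mul]; congr 1; omega
        have hba : b * a = a * b := Nat.mul_comm b a
        omega
    · rintro (⟨rfl, rfl⟩ | ⟨m', n', hrep, rfl, rfl⟩)
      · exact he₀
      · have : (m' + b) * a = m' * a + b * a := Nat.add_mul _ _ _
        have hba : b * a = a * b := Nat.mul_comm b a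
        omega
  have hfin : {p : ℕ × ℕ | p.1 * a + p.2 * b = j}.Finite := rep_finite ha hb j
  have hnot : (m₀, n₀) ∉ (fun p : ℕ × ℕ => (p.1 + b, p.2)) '' {p | p.1 * a + p.2 * b = j} := by
    rintro ⟨⟨x1, x2⟩, -, hx⟩
    simp only [Prod.mk.injEq] at hx
    omega
  have e1 : repCount a b (j + a * b) = {p : ℕ × ℕ | p.1 * a + p.2 * b = j + a * b}.ncard :=
    Nat.card_coe_set_eq _
  have e2 : repCount a b j = {p : ℕ × ℕ | p.1 * a + p.2 * b = j}.ncard :=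
    Nat.card_coe_set_eq _
  rw [e1, e2, hset, Set.ncard_insert_of_notMem hnot (hfin.image _),
    Set.ncard_image_of_injective _ hinj]

private lemma repCount_add_mul {a b : ℕ} (ha : 0 < a) (hb : 0 < b) (hab : Nat.Coprime a b)
    (j t : ℕ) : repCount a b (j + a * b * t) = repCount a b j + t := by
  induction t with
  | zero => simp
  | succ t ih =>
      have : j + a * b * (t + 1) = (j + a * b * t) + a * b := by ring
      rw [this, repCount_add ha hb hab, ih]
      omega

private lemma repCount_le_one {a b : ℕ} (ha : 0 < a) (hb : 0 < b) (hab : Nat.Coprime a b)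
    {j : ℕ} (hj : j < a * b) : repCount a b j ≤ 1 := by
  have e : repCount a b j = {p : ℕ × ℕ | p.1 * a + p.2 * b = j}.ncard :=
    Nat.card_coe_set_eq _
  rw [e]
  refine (Set.ncard_le_one (rep_finite ha hb j)).2 ?_
  rintro ⟨m₁, n₁⟩ h1 ⟨m₂, n₂⟩ h2
  simp only [Set.mem_setOf_eq] at h1 h2
  have hm1 : m₁ < b := by
    by_contra hcon
    have : b * a ≤ m₁ * a := Nat.mul_le_mul_right a (by omega)
    have hba : b * a = a * b := Nat.mul_comm b a
    omega
  have hm2 : m₂ < b := by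
    by_contra hcon
    have : b * a ≤ m₂ * a := Nat.mul_le_mul_right a (by omega)
    have hba : b * a = a * b := Nat.mul_comm b a
    omega
  obtain ⟨e1, e2⟩ := rep_uniq hb hab hm1 hm2 (h1.trans h2.symm)
  simp [e1, e2]

private lemma coeff_key {a b : ℕ} (ha : 0 < a) (hb : 0 < b) (hab : Nat.Coprime a b)
    (k j : ℕ) :
    (if k < repCount a b j then (1 : ℤ) else 0)
      = (if a * b * k ≤ j then (repCount a b (j - a * b * k) : ℤ) else 0)
        - (if a * b * (k + 1) ≤ j then (repCount a b (j - a * b * (k + 1)) : ℤ) else 0) := by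
  have hc : 0 < a * b := Nat.mul_pos ha hb
  have hsucc : a * b * (k + 1) = a * b * k + a * b := by ring
  rcases lt_or_ge j (a * b * k) with h1 | h1
  · -- j < abk : r j ≤ k
    have hrj : repCount a b j ≤ k := by
      have hdec : j = j % (a * b) + a * b * (j / (a * b)) := (Nat.mod_add_div _ _).symm
      have h2 : repCount a b j = repCount a b (j % (a * b)) + j / (a * b) := by
        conv_lhs => rw [hdec]
        exact repCount_add_mul ha hb hab _ _
      have h3 : repCount a b (j % (a * b)) ≤ 1 :=
        repCount_le_one ha hb hab (Nat.mod_lt _ hc)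
      have h4 : j / (a * b) < k := by
        rw [Nat.div_lt_iff_lt_mul hc, Nat.mul_comm k (a * b)]
        exact h1
      omega
    rw [if_neg (show ¬ k < repCount a b j by omega),
      if_neg (show ¬ a * b * k ≤ j by omega),
      if_neg (show ¬ a * b * (k + 1) ≤ j by omega)]
    ring
  · rcases lt_or_ge j (a * b * (k + 1)) with h2 | h2
    · -- abk ≤ j < ab(k+1)
      have hdec : j = (j - a * b * k) + a * b * k := by omega
      have hr : repCount a b j = repCount a b (j - a * b * k) + k := by
        conv_lhs => rw [hdec]
        exact repCount_add_mul ha hb hab _ _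
      have hsmall : j - a * b * k < a * b := by omega
      have hle1 : repCount a b (j - a * b * k) ≤ 1 :=
        repCount_le_one ha hb hab hsmall
      rw [if_pos h1, if_neg (show ¬ a * b * (k + 1) ≤ j by omega), sub_zero]
      rcases Nat.eq_zero_or_pos (repCount a b (j - a * b * k)) with h | h
      · rw [h, if_neg (show ¬ k < repCount a b j by omega)]; simp
      · have h' : repCount a b (j - a * b * k) = 1 := by omega
        rw [h', if_pos (show k < repCount a b j by omega)]; simp
    · -- ab(k+1) ≤ j
      have hdec1 : j - a * b * k = (j - a * b * (k + 1)) + a * b := by omega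
      have hr1 : repCount a b (j - a * b * k)
          = repCount a b (j - a * b * (k + 1)) + 1 := by
        rw [hdec1]; exact repCount_add ha hb hab _
      have hdec2 : j = ((j - a * b * (k + 1)) + a * b) + a * b * k := by omega
      have hr2 : repCount a b j = repCount a b (j - a * b * (k + 1)) + 1 + k := by
        conv_lhs => rw [hdec2]
        rw [repCount_add_mul ha hb hab, repCount_add ha hb hab]
      rw [if_pos (show k < repCount a b j by omega), if_pos h1, if_pos h2, hr1]
      push_cast
      ring

private lemma indicator_mul_one_sub_pow (c : ℕ) (hc : 0 < c) :
    (PowerSeries.mk fun j => if c ∣ j then (1 : ℤ) else 0) *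
      (1 - (PowerSeries.X : PowerSeries ℤ) ^ c) = 1 := by
  ext n
  rw [mul_sub, mul_one, map_sub, PowerSeries.coeff_mul_X_pow', PowerSeries.coeff_mk,
    PowerSeries.coeff_mk, PowerSeries.coeff_one]
  rcases Nat.eq_zero_or_pos n with rfl | hn
  · simp [Nat.not_succ_le_zero, hc.ne']
  · rw [if_neg hn.ne']
    rcases le_or_gt c n with h | h
    · rw [if_pos h]
      have hiff : c ∣ n ↔ c ∣ n - c := by
        constructor
        · intro hd; exact Nat.dvd_sub hd dvd_rfl
        · intro hd
          have : n = (n - c) + c := by omega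
          rw [this]; exact Dvd.dvd.add hd dvd_rfl
      by_cases hd : c ∣ n
      · rw [if_pos hd, if_pos (hiff.1 hd)]; ring
      · rw [if_neg hd, if_neg (fun h' => hd (hiff.2 h'))]; ring
    · have hnd : ¬ c ∣ n := fun hd => by have := Nat.le_of_dvd hn hd; omega
      rw [if_neg (show ¬ c ≤ n by omega), if_neg hnd]; ring

private lemma repCount_eq_card {a b : ℕ} (ha : 0 < a) (hb : 0 < b) (j : ℕ) :
    repCount a b j
      = ((Finset.HasAntidiagonal.antidiagonal j).filter (fun q : ℕ × ℕ => a ∣ q.1 ∧ b ∣ q.2)).card := by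
  rw [← Fintype.card_coe, ← Nat.card_eq_fintype_card, repCount]
  apply Nat.card_congr
  refine ⟨fun p => ⟨(p.1.1 * a, p.1.2 * b), ?_⟩, fun q => ⟨(q.1.1 / a, q.1.2 / b), ?_⟩, ?_, ?_⟩
  · simp only [Finset.mem_filter, Finset.HasAntidiagonal.mem_antidiagonal]
    exact ⟨p.2, dvd_mul_left a _, dvd_mul_left b _⟩
  · obtain ⟨hsum, hda, hdb⟩ := Finset.mem_filter.1 q.2
    rw [Finset.HasAntidiagonal.mem_antidiagonal] at hsum
    simp only
    rw [Nat.div_mul_cancel hda, Nat.div_mul_cancel hdb, hsum]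
  · rintro ⟨⟨m, n⟩, hp⟩
    simp only [Subtype.mk.injEq, Prod.mk.injEq]
    exact ⟨Nat.mul_div_cancel _ ha, Nat.mul_div_cancel _ hb⟩
  · rintro ⟨⟨u, v⟩, hq⟩
    obtain ⟨hsum, hda, hdb⟩ := Finset.mem_filter.1 hq
    simp only [Subtype.mk.injEq, Prod.mk.injEq]
    exact ⟨Nat.div_mul_cancel hda, Nat.div_mul_cancel hdb⟩

private lemma F_eq {a b : ℕ} (ha : 0 < a) (hb : 0 < b) :
    (PowerSeries.mk fun j => (repCount a b j : ℤ))
      = (PowerSeries.mk fun j => if a ∣ j then (1 : ℤ) else 0) *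
          (PowerSeries.mk fun j => if b ∣ j then (1 : ℤ) else 0) := by
  ext j
  rw [PowerSeries.coeff_mk, PowerSeries.coeff_mul]
  simp only [PowerSeries.coeff_mk]
  have : ∀ p : ℕ × ℕ,
      (if a ∣ p.1 then (1 : ℤ) else 0) * (if b ∣ p.2 then (1 : ℤ) else 0)
        = if a ∣ p.1 ∧ b ∣ p.2 then (1 : ℤ) else 0 := by
    intro p; split_ifs with h1 h2 h3 <;> simp_all
  rw [Finset.sum_congr rfl fun p _ => this p, Finset.sum_boole,
    repCount_eq_card ha hb]

end Aux

/-- The generating function of the set `S_k(a,b)` of integers with more than `k`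
representations satisfies
`(∑_{j ∈ S_k(a,b)} X^j) * (1 - X^a) * (1 - X^b) = X^(a*b*k) * (1 - X^(a*b))`. -/
theorem frobenius_genfct_Sk (a b k : ℕ) (ha : 0 < a) (hb : 0 < b) (hab : Nat.Coprime a b) :
    (PowerSeries.mk fun j => if k < repCount a b j then (1 : ℤ) else 0) *
        (1 - (PowerSeries.X : PowerSeries ℤ) ^ a) * (1 - (PowerSeries.X : PowerSeries ℤ) ^ b) =
      (PowerSeries.X : PowerSeries ℤ) ^ (a * b * k) *
        (1 - (PowerSeries.X : PowerSeries ℤ) ^ (a * b)) := by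
  set F : PowerSeries ℤ := PowerSeries.mk fun j => (repCount a b j : ℤ) with hF
  have h1 : F * (1 - PowerSeries.X ^ a) * (1 - PowerSeries.X ^ b) = 1 := by
    rw [hF, F_eq ha hb]
    have : (PowerSeries.mk fun j => if a ∣ j then (1 : ℤ) else 0) *
          (PowerSeries.mk fun j => if b ∣ j then (1 : ℤ) else 0) *
          (1 - PowerSeries.X ^ a) * (1 - PowerSeries.X ^ b)
        = ((PowerSeries.mk fun j => if a ∣ j then (1 : ℤ) else 0) * (1 - PowerSeries.X ^ a)) *
          ((PowerSeries.mk fun j => if b ∣ j then (1 : ℤ) else 0) * (1 - PowerSeries.X ^ b)) := by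
      ring
    rw [this, indicator_mul_one_sub_pow a ha, indicator_mul_one_sub_pow b hb, one_mul]
  have h2 : (PowerSeries.mk fun j => if k < repCount a b j then (1 : ℤ) else 0)
      = F * PowerSeries.X ^ (a * b * k) - F * PowerSeries.X ^ (a * b * (k + 1)) := by
    ext j
    rw [map_sub, PowerSeries.coeff_mul_X_pow', PowerSeries.coeff_mul_X_pow',
      PowerSeries.coeff_mk]
    simp only [hF, PowerSeries.coeff_mk]
    exact coeff_key ha hb hab k j
  rw [h2]
  have hsucc : a * b * (k + 1) = a * b * k + a * b := by ring
  calc (F * PowerSeries.X ^ (a * b * k) - F * PowerSeries.X ^ (a * b * (k + 1))) *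
        (1 - PowerSeries.X ^ a) * (1 - PowerSeries.X ^ b)
      = (F * (1 - PowerSeries.X ^ a) * (1 - PowerSeries.X ^ b)) *
          (PowerSeries.X ^ (a * b * k) - PowerSeries.X ^ (a * b * k) * PowerSeries.X ^ (a * b)) := by
        rw [hsucc, pow_add]; ring
    _ = PowerSeries.X ^ (a * b * k) * (1 - PowerSeries.X ^ (a * b)) := by
        rw [h1, one_mul]; ring
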